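/- For every k ≥ 2 and every k-tuple (a_1,...,a_k) of positive integers there exists a k-tuple (a*_1,...,a*_k) of positive integers such that: (i) K_{a*_1,...,a*_k} has an embedded K_{a_1,...,a_k}-decomposition, and (ii) a transversal design TD(k, a*_i) exists for each i = 1,...,k. -/

import Mathlib

open SimpleGraph Finset

/-- An embedded `K_{a_1,…,a_k}`-decomposition of `K_{p·a_1,…,p·a_k}`:
there are partitions of each vertex class `V_i = Fin p × Fin (a i)` into `p` cells of size
`a i` (given by a labelling `part i : V_i → Fin p`), and an edge decomposition of the
complete multipartite graph `K_{p·a_1,…,p·a_k}` into copies of `K_{a_1,…,a_k}` such that,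
for each copy, its `i`-th partite class coincides with one of the cells of `V_i`. -/
def HasEmbeddedDecomposition (k p : ℕ) (a : Fin k → ℕ) : Prop :=
  ∃ part : (i : Fin k) → (Fin p × Fin (a i)) → Fin p,
    (∀ i j, {x : Fin p × Fin (a i) | part i x = j}.ncard = a i) ∧
    ∃ (ι : Type) (c : ι → (Σ i : Fin k, Fin (a i)) → (Σ i : Fin k, Fin p × Fin (a i))),
      (∀ t, Function.Injective (c t)) ∧
      (∀ t (i : Fin k) (x : Fin (a i)), (c t ⟨i, x⟩).1 = i) ∧
      (∀ t (i : Fin k), ∃ j : Fin p,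
        {y : Fin p × Fin (a i) | part i y = j} =
          {y : Fin p × Fin (a i) | ∃ x : Fin (a i), c t ⟨i, x⟩ = ⟨i, y⟩}) ∧
      ∀ e ∈ (completeMultipartiteGraph fun i : Fin k => Fin p × Fin (a i)).edgeSet,
        ∃! t : ι, ∃ u v, (completeMultipartiteGraph fun i : Fin k => Fin (a i)).Adj u v ∧
          e = s(c t u, c t v)

/-- A transversal design TD(k,n): points are `Fin k × Fin n`, the groups are the sets
`{i} × Fin n` (each of size `n`), and `B` is the collection of blocks, each a `k`-element
set of points, such that any two distinct points from the same group lie in no common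
block, while any two points from different groups lie in exactly one common block. -/
def IsTransversalDesign (k n : ℕ) (B : Set (Finset (Fin k × Fin n))) : Prop :=
  (∀ b ∈ B, b.card = k) ∧
  ∀ p q : Fin k × Fin n, p ≠ q →
    ((p.1 = q.1 → ∀ b ∈ B, ¬(p ∈ b ∧ q ∈ b)) ∧
     (p.1 ≠ q.1 → ∃! b : Finset (Fin k × Fin n), b ∈ B ∧ p ∈ b ∧ q ∈ b))

/-- Existence of a transversal design TD(k,n). -/
def TransversalDesignExists (k n : ℕ) : Prop :=
  ∃ B : Set (Finset (Fin k × Fin n)), IsTransversalDesign k n B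

/-- For every `k ≥ 2` and every `k`-tuple `(a_1,…,a_k)` of positive integers there is a
`k`-tuple `(a*_1,…,a*_k) = (p·a_1,…,p·a_k)` of positive integers such that
`K_{a*_1,…,a*_k}` has an embedded `K_{a_1,…,a_k}`-decomposition and a transversal design
`TD(k, a*_i)` exists for each `i`. -/


def TDFun (k : ℕ) (α : Type*) (S : Set (Fin k → α)) : Prop :=
  ∀ i j : Fin k, i ≠ j → ∀ x y : α, ∃! f, f ∈ S ∧ f i = x ∧ f j = y

lemma tdfun_one (k : ℕ) : TDFun k (Fin 1) Set.univ := by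
  intro i j hij x y
  refine ⟨fun _ => x, ⟨trivial, rfl, Subsingleton.elim _ _⟩, ?_⟩
  intro g hg
  funext t
  exact Subsingleton.elim _ _

lemma tdfun_equiv {k : ℕ} {α β : Type*} (e : α ≃ β) {S : Set (Fin k → α)}
    (h : TDFun k α S) : ∃ T : Set (Fin k → β), TDFun k β T := by
  refine ⟨{g | (fun i => e.symm (g i)) ∈ S}, fun i j hij x y => ?_⟩
  obtain ⟨f, ⟨hfS, hfi, hfj⟩, huniq⟩ := h i j hij (e.symm x) (e.symm y)
  refine ⟨fun i => e (f i), ⟨by simpa using hfS, by simp [hfi], by simp [hfj]⟩, ?_⟩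
  intro g ⟨hgS, hgi, hgj⟩
  have := huniq (fun i => e.symm (g i)) ⟨hgS, by simp [hgi], by simp [hgj]⟩
  funext t
  have := congrFun this t
  simpa using congrArg e this

lemma tdfun_prod {k : ℕ} {α β : Type*} {S : Set (Fin k → α)} {T : Set (Fin k → β)}
    (hS : TDFun k α S) (hT : TDFun k β T) :
    TDFun k (α × β) {h | ∃ f ∈ S, ∃ g ∈ T, h = fun i => (f i, g i)} := by
  intro i j hij x y
  obtain ⟨f, ⟨hfS, hfi, hfj⟩, hfu⟩ := hS i j hij x.1 y.1
  obtain ⟨g, ⟨hgT, hgi, hgj⟩, hgu⟩ := hT i j hij x.2 y.2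
  refine ⟨fun i => (f i, g i), ⟨⟨f, hfS, g, hgT, rfl⟩, by simp [hfi, hgi], by simp [hfj, hgj]⟩, ?_⟩
  rintro h ⟨⟨f', hf', g', hg', rfl⟩, hi, hj⟩
  have hf'' : f' = f := hfu f' ⟨hf', congrArg Prod.fst hi, congrArg Prod.fst hj⟩
  have hg'' : g' = g := hgu g' ⟨hg', congrArg Prod.snd hi, congrArg Prod.snd hj⟩
  rw [hf'', hg'']

lemma tdfun_field (k : ℕ) (F : Type*) [Field F] [Fintype F] [DecidableEq F]
    (hk : k ≤ Fintype.card F) : ∃ S : Set (Fin k → F), TDFun k F S := by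
  set ι : Fin k → F := fun i => (Fintype.equivFin F).symm (Fin.castLE hk i) with hι
  have hinj : Function.Injective ι := fun i j h => by
    have := (Fintype.equivFin F).symm.injective h
    exact Fin.castLE_injective hk this
  refine ⟨{f | ∃ s t : F, f = fun i => s * ι i + t}, fun i j hij x y => ?_⟩
  have hne : ι i - ι j ≠ 0 := sub_ne_zero.mpr (fun h => hij (hinj h))
  set s : F := (x - y) / (ι i - ι j) with hs
  set t : F := x - s * ι i with ht
  refine ⟨fun i => s * ι i + t, ⟨⟨s, t, rfl⟩, by ring, ?_⟩, ?_⟩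
  · have : s * (ι i - ι j) = x - y := by
      rw [hs]; field_simp
    rw [ht]; ring_nf
    linear_combination -this
  · rintro f ⟨⟨s', t', rfl⟩, hfi, hfj⟩
    have hs' : s' = s := by
      have h1 : s' * (ι i - ι j) = x - y := by linear_combination hfi - hfj
      rw [hs]
      field_simp
      linear_combination h1
    have ht' : t' = t := by
      rw [ht, ← hs', ← hfi]; ring
    rw [hs', ht']

lemma tdfun_exists (k : ℕ) : ∀ n : ℕ, 0 < n →
    (∀ q ∈ n.primeFactors, k ≤ q ^ n.factorization q) →
    ∃ S : Set (Fin k → Fin n), TDFun k (Fin n) S := by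
  intro n
  induction n using Nat.strong_induction_on with
  | _ n ih =>
    intro hn h
    rcases eq_or_lt_of_le (show 1 ≤ n from hn) with h1 | h1
    · obtain ⟨S, hS⟩ := tdfun_equiv (finCongr h1 : Fin 1 ≃ Fin n) (tdfun_one k)
      exact ⟨S, hS⟩
    · -- n ≥ 2
      have hn1 : n ≠ 1 := by omega
      have hn0 : n ≠ 0 := by omega
      set q := n.minFac with hq
      have hqp : q.Prime := Nat.minFac_prime hn1
      set e := n.factorization q with he
      set m := ordCompl[q] n with hm
      have hdvd : q ^ e * m = n := Nat.ordProj_mul_ordCompl_eq_self n q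
      have hqmem : q ∈ n.primeFactors := by
        rw [Nat.mem_primeFactors]
        exact ⟨hqp, n.minFac_dvd, hn0⟩
      have he0 : e ≠ 0 := by
        have := Nat.Prime.factorization_pos_of_dvd hqp hn0 n.minFac_dvd
        omega
      have hqe1 : 1 < q ^ e :=
        Nat.one_lt_pow he0 hqp.one_lt
      have hm0 : 0 < m := Nat.ordCompl_pos q hn0
      have hmlt : m < n := by
        calc m = 1 * m := (one_mul m).symm
        _ < q ^ e * m := (Nat.mul_lt_mul_right hm0).mpr hqe1
        _ = n := hdvd
      -- TD on Fin m by induction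
      have hmh : ∀ q' ∈ m.primeFactors, k ≤ q' ^ m.factorization q' := by
        intro q' hq'
        have hq'p : q'.Prime := Nat.prime_of_mem_primeFactors hq'
        have hq'ne : q' ≠ q := by
          intro hEq
          have hd : q' ∣ m := Nat.dvd_of_mem_primeFactors hq'
          rw [hEq] at hd
          exact Nat.not_dvd_ordCompl hqp hn0 hd
        have hfact : m.factorization q' = n.factorization q' := by
          rw [hm, Nat.factorization_ordCompl, Finsupp.erase_ne hq'ne]
        have hq'n : q' ∈ n.primeFactors := by
          rw [Nat.mem_primeFactors] at hq' ⊢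
          exact ⟨hq'p, hq'.2.1.trans (Nat.ordCompl_dvd n q), hn0⟩
        rw [hfact]
        exact h q' hq'n
      obtain ⟨Sm, hSm⟩ := ih m hmlt hm0 hmh
      -- TD on GaloisField q e
      haveI : Fact q.Prime := ⟨hqp⟩
      haveI : Fintype (GaloisField q e) := Fintype.ofFinite _
      haveI : DecidableEq (GaloisField q e) := Classical.decEq _
      have hcard : Fintype.card (GaloisField q e) = q ^ e := by
        rw [← Nat.card_eq_fintype_card]
        exact GaloisField.card q e he0
      have hkF : k ≤ Fintype.card (GaloisField q e) := by
        rw [hcard]; exact h q hqmem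
      obtain ⟨SF, hSF⟩ := tdfun_field k (GaloisField q e) hkF
      -- product and transport
      have hprod := tdfun_prod hSF hSm
      have eFm : GaloisField q e × Fin m ≃ Fin n :=
        ((Fintype.equivFinOfCardEq hcard).prodCongr (Equiv.refl (Fin m))).trans
          ((finProdFinEquiv).trans (finCongr hdvd))
      exact tdfun_equiv eFm hprod

lemma td_of_tdfun {k n : ℕ} {S : Set (Fin k → Fin n)} (hS : TDFun k (Fin n) S) :
    ∃ B : Set (Finset (Fin k × Fin n)), IsTransversalDesign k n B := by
  classical
  refine ⟨{b | ∃ f ∈ S, b = Finset.image (fun i => (i, f i)) Finset.univ}, ?_, ?_⟩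
  · rintro b ⟨f, hf, rfl⟩
    rw [Finset.card_image_of_injective _ (fun i j h => congrArg Prod.fst h)]
    simp
  · intro p q hpq
    have hmem : ∀ (f : Fin k → Fin n) (r : Fin k × Fin n),
        r ∈ Finset.image (fun i => (i, f i)) Finset.univ ↔ f r.1 = r.2 := by
      intro f r
      simp only [Finset.mem_image, Finset.mem_univ, true_and]
      constructor
      · rintro ⟨i, hi⟩
        rw [← hi]
      · intro h
        exact ⟨r.1, by rw [h]⟩
    constructor
    · rintro hEq b ⟨f, hf, rfl⟩ ⟨hp, hq⟩
      rw [hmem] at hp hq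
      apply hpq
      rw [Prod.ext_iff]
      exact ⟨hEq, by rw [← hp, ← hq, hEq]⟩
    · intro hne
      obtain ⟨f, ⟨hfS, hfp, hfq⟩, hfu⟩ := hS p.1 q.1 hne p.2 q.2
      refine ⟨Finset.image (fun i => (i, f i)) Finset.univ,
        ⟨⟨f, hfS, rfl⟩, (hmem f p).2 hfp, (hmem f q).2 hfq⟩, ?_⟩
      rintro b ⟨⟨g, hgS, rfl⟩, hp, hq⟩
      rw [hmem] at hp hq
      rw [hfu g ⟨hgS, hp, hq⟩]

lemma cell_ncard {p m : ℕ} (j : Fin p) :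
    {x : Fin p × Fin m | x.1 = j}.ncard = m := by
  have : {x : Fin p × Fin m | x.1 = j} = (fun y => (j, y)) '' Set.univ := by
    ext x
    simp only [Set.mem_setOf_eq, Set.image_univ, Set.mem_range]
    constructor
    · intro h
      exact ⟨x.2, by rw [← h]⟩
    · rintro ⟨y, rfl⟩
      rfl
  rw [this, Set.ncard_image_of_injective _ (fun y z h => (Prod.ext_iff.mp h).2),
    Set.ncard_univ, Nat.card_eq_fintype_card, Fintype.card_fin]

lemma embedded_of_tdfun {k p : ℕ} (a : Fin k → ℕ) {S : Set (Fin k → Fin p)}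
    (hS : TDFun k (Fin p) S) : HasEmbeddedDecomposition k p a := by
  refine ⟨fun i x => x.1, fun i j => cell_ncard j, ?_⟩
  refine ⟨{f : Fin k → Fin p // f ∈ S},
    fun t x => ⟨x.1, (t.1 x.1, x.2)⟩, ?_, fun t i x => rfl, ?_, ?_⟩
  · rintro t ⟨i, x⟩ ⟨i', x'⟩ h
    simp only [Sigma.mk.inj_iff] at h
    obtain ⟨h1, h2⟩ := h
    subst h1
    simp only [heq_eq_eq, Prod.mk.injEq] at h2
    rw [h2.2]
  · intro t i
    refine ⟨t.1 i, ?_⟩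
    ext ⟨j, y⟩
    simp only [Set.mem_setOf_eq, Sigma.mk.inj_iff, heq_eq_eq, Prod.mk.injEq, true_and]
    constructor
    · intro h
      exact ⟨y, h.symm, rfl⟩
    · rintro ⟨x, hx, -⟩
      exact hx.symm
  · intro e he
    induction e with
    | _ u v =>
      rcases u with ⟨i, s, x⟩
      rcases v with ⟨i', s', x'⟩
      rw [SimpleGraph.mem_edgeSet] at he
      have hne : i ≠ i' := he
      obtain ⟨f, ⟨hfS, hfu, hfv⟩, hfuniq⟩ := hS i i' hne s s'
      refine ⟨⟨f, hfS⟩, ⟨⟨i, x⟩, ⟨i', x'⟩, hne, ?_⟩, ?_⟩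
      · simp only
        rw [hfu, hfv]
      · rintro ⟨g, hgS⟩ ⟨⟨j, y⟩, ⟨j', y'⟩, hadj, hsym⟩
        simp only at hsym
        have extract : ∀ (j0 : Fin k) (y0 : Fin (a j0)) (i0 : Fin k) (s0 : Fin p)
            (x0 : Fin (a i0)), (⟨i0, (s0, x0)⟩ : Σ i : Fin k, Fin p × Fin (a i)) =
              ⟨j0, (g j0, y0)⟩ → g i0 = s0 := by
          rintro j0 y0 i0 s0 x0 hEq
          obtain ⟨h1, h2⟩ := Sigma.mk.inj_iff.mp hEq
          subst h1
          exact ((Prod.ext_iff.mp (eq_of_heq h2)).1).symm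
        rcases Sym2.eq_iff.mp hsym with ⟨h1, h2⟩ | ⟨h1, h2⟩
        · exact Subtype.ext (hfuniq g ⟨hgS, extract _ _ _ _ _ h1, extract _ _ _ _ _ h2⟩)
        · exact Subtype.ext (hfuniq g ⟨hgS, extract _ _ _ _ _ h1, extract _ _ _ _ _ h2⟩)

theorem exists_multiple_with_embedded_decomposition_and_TD (k : ℕ) (hk : 2 ≤ k)
    (a : Fin k → ℕ) (ha : ∀ i, 1 ≤ a i) :
    ∃ p : ℕ, 0 < p ∧ HasEmbeddedDecomposition k p a ∧
      ∀ i : Fin k, TransversalDesignExists k (p * a i) := by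
  classical
  set N := ∏ i, a i with hN
  have hN0 : 0 < N := Finset.prod_pos (fun i _ => ha i)
  set p := N ^ k with hp
  have hp0 : 0 < p := pow_pos hN0 k
  have key : ∀ c : ℕ, 0 < c → c ∣ N →
      ∃ S : Set (Fin k → Fin (p * c)), TDFun k (Fin (p * c)) S := by
    intro c hc hcd
    apply tdfun_exists
    · positivity
    · intro q hq
      have hqp := Nat.prime_of_mem_primeFactors hq
      have hqd : q ∣ p * c := Nat.dvd_of_mem_primeFactors hq
      have hqN : q ∣ N := by
        have hd2 : p * c ∣ N ^ (k + 1) := by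
          rw [hp, pow_succ]
          exact mul_dvd_mul_left _ hcd
        exact hqp.dvd_of_dvd_pow (hqd.trans hd2)
      have h1 : 1 ≤ N.factorization q :=
        Nat.Prime.factorization_pos_of_dvd hqp hN0.ne' hqN
      have hf : k ≤ (p * c).factorization q := by
        rw [Nat.factorization_mul (by positivity) hc.ne', hp, Nat.factorization_pow]
        simp only [Finsupp.coe_add, Pi.add_apply, Finsupp.smul_apply, smul_eq_mul]
        calc k = k * 1 := (mul_one k).symm
        _ ≤ k * N.factorization q := Nat.mul_le_mul_left k h1
        _ ≤ k * N.factorization q + c.factorization q := Nat.le_add_right _ _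
      calc k ≤ 2 ^ k := Nat.le_of_lt (Nat.lt_two_pow_self (n := k))
      _ ≤ q ^ k := Nat.pow_le_pow_left hqp.two_le k
      _ ≤ q ^ ((p * c).factorization q) := Nat.pow_le_pow_right hqp.pos hf
  refine ⟨p, hp0, ?_, ?_⟩
  · obtain ⟨S, hS⟩ := key 1 one_pos (one_dvd N)
    obtain ⟨S', hS'⟩ := tdfun_equiv (finCongr (mul_one p)) hS
    exact embedded_of_tdfun a hS'
  · intro i
    obtain ⟨S, hS⟩ := key (a i) (ha i) (Finset.dvd_prod_of_mem a (Finset.mem_univ i))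
    exact td_of_tdfun hS
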